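/- arXiv:2002.01496 — 2 statements merged into one kernel-verified Lean document; each statement's English description precedes it below -/
import Mathlib

section
/- Consider a strictly convex quadratic program: minimize $\|x\|^2$ over $x \in \mathbb{R}^n$ subject to $Ax \le b$ (with $A$ fixed and $b$ varying over parameters for which the feasible set is nonempty). Then for each such $b$ the minimizer $x^*(b)$ exists and is unique, and the map $b \mapsto x^*(b)$ is Lipschitz continuous: there is a constant $C > 0$ depending only on $A$ such that $\|x^*(b^{(1)}) - x^*(b^{(2)})\| \le C \|b^{(1)} - b^{(2)}\|$ for all admissible $b^{(1)}, b^{(2)}$. -/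
open Matrix Set Filter RealInnerProductSpace

noncomputable section

namespace Stmt12

variable {m n : ℕ}

/-- `A.mulVec` as a linear map between Euclidean spaces. -/
def mulVecL (A : Matrix (Fin m) (Fin n) ℝ) :
    EuclideanSpace ℝ (Fin n) →ₗ[ℝ] EuclideanSpace ℝ (Fin m) where
  toFun x := WithLp.toLp 2 (A.mulVec x)
  map_add' x y := by
    ext i
    simp [Matrix.mulVec, dotProduct, PiLp.add_apply, mul_add, Finset.sum_add_distrib]
  map_smul' c x := by
    ext i
    simp [Matrix.mulVec, dotProduct, PiLp.smul_apply, smul_eq_mul, Finset.mul_sum,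
      mul_left_comm]

lemma mulVecL_apply (A : Matrix (Fin m) (Fin n) ℝ) (x : EuclideanSpace ℝ (Fin n)) :
    mulVecL A x = A.mulVec x := rfl

lemma continuous_mulVecL (A : Matrix (Fin m) (Fin n) ℝ) : Continuous (mulVecL A) :=
  (mulVecL A).continuous_of_finiteDimensional

/-- The feasible set. -/
def K (A : Matrix (Fin m) (Fin n) ℝ) (b : EuclideanSpace ℝ (Fin m)) :
    Set (EuclideanSpace ℝ (Fin n)) := {x | A.mulVec x ≤ b}

lemma K_closed (A : Matrix (Fin m) (Fin n) ℝ) (b : EuclideanSpace ℝ (Fin m)) :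
    IsClosed (K A b) := by
  have : K A b = ⋂ i, {x : EuclideanSpace ℝ (Fin n) | (mulVecL A x) i ≤ b i} := by
    ext x; simp [K, Pi.le_def, mulVecL_apply]
  rw [this]
  exact isClosed_iInter fun i =>
    isClosed_le ((EuclideanSpace.proj i).continuous.comp (continuous_mulVecL A))
      continuous_const

lemma K_convex (A : Matrix (Fin m) (Fin n) ℝ) (b : EuclideanSpace ℝ (Fin m)) :
    Convex ℝ (K A b) := by
  intro x hx y hy a c ha hc hac
  intro i
  have h1 := hx i
  have h2 := hy i
  have e : (A.mulVec (a • x + c • y : EuclideanSpace ℝ (Fin n))) i = a * A.mulVec x i + c * A.mulVec y i := by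
    have := (mulVecL A).map_add (a • x) (c • y)
    have h3 := (mulVecL A).map_smul a x
    have h4 := (mulVecL A).map_smul c y
    have := congrFun (congrArg (fun v : EuclideanSpace ℝ (Fin m) => (v : Fin m → ℝ)) this) i
    simp only [mulVecL_apply] at this h3 h4
    simp [Matrix.mulVec_add, Matrix.mulVec_smul]
  rw [e]
  have hb : a * b i + c * b i = b i := by rw [← add_mul, hac, one_mul]
  have := mul_le_mul_of_nonneg_left h1 ha
  have := mul_le_mul_of_nonneg_left h2 hc
  linarith

/-- Existence of a minimizer. -/
lemma exists_min (A : Matrix (Fin m) (Fin n) ℝ) (b : EuclideanSpace ℝ (Fin m))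
    (hne : (K A b).Nonempty) :
    ∃ x ∈ K A b, ∀ y ∈ K A b, ‖x‖ ≤ ‖y‖ := by
  obtain ⟨y₀, hy₀⟩ := hne
  have hcpt : IsCompact (K A b ∩ Metric.closedBall 0 ‖y₀‖) := by
    exact (Metric.isCompact_of_isClosed_isBounded
      ((K_closed A b).inter Metric.isClosed_closedBall)
      (Metric.isBounded_closedBall.subset inter_subset_right))
  have hne' : (K A b ∩ Metric.closedBall 0 ‖y₀‖).Nonempty :=
    ⟨y₀, hy₀, by simp⟩
  obtain ⟨x, hx, hxmin⟩ := hcpt.exists_isMinOn hne' continuous_norm.continuousOn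
  refine ⟨x, hx.1, fun y hy => ?_⟩
  by_cases h : y ∈ Metric.closedBall (0 : EuclideanSpace ℝ (Fin n)) ‖y₀‖
  · exact hxmin ⟨hy, h⟩
  · have : ‖y₀‖ < ‖y‖ := by simpa using h
    have : ‖x‖ ≤ ‖y₀‖ := hxmin ⟨hy₀, by simp⟩
    linarith

/-- Uniqueness: two minimizers coincide. -/
lemma min_unique (A : Matrix (Fin m) (Fin n) ℝ) (b : EuclideanSpace ℝ (Fin m))
    {x y : EuclideanSpace ℝ (Fin n)} (hx : x ∈ K A b) (hy : y ∈ K A b)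
    (hxm : ∀ z ∈ K A b, ‖x‖ ≤ ‖z‖) (hym : ∀ z ∈ K A b, ‖y‖ ≤ ‖z‖) : x = y := by
  have hmid : (1/2 : ℝ) • x + (1/2 : ℝ) • y ∈ K A b :=
    K_convex A b hx hy (by norm_num) (by norm_num) (by norm_num)
  have h1 : ‖x‖ = ‖y‖ := le_antisymm (hxm y hy) (hym x hx)
  have h2 : ‖x‖ ≤ ‖(1/2 : ℝ) • x + (1/2 : ℝ) • y‖ := hxm _ hmid
  -- parallelogram law
  have par : ‖x + y‖ ^ 2 + ‖x - y‖ ^ 2 = 2 * (‖x‖ ^ 2 + ‖y‖ ^ 2) := by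
    have := parallelogram_law_with_norm ℝ x y
    nlinarith [this]
  have hxy : ‖(1/2 : ℝ) • x + (1/2 : ℝ) • y‖ = (1/2) * ‖x + y‖ := by
    rw [← smul_add, norm_smul]; simp
  have h3 : ‖x‖ ≤ (1/2) * ‖x + y‖ := by rwa [hxy] at h2
  have h4 : ‖x - y‖ ^ 2 ≤ 0 := by nlinarith [norm_nonneg (x + y), norm_nonneg x]
  have h5 : ‖x - y‖ = 0 := by nlinarith [norm_nonneg (x - y), sq_nonneg ‖x - y‖]
  exact sub_eq_zero.mp (norm_eq_zero.mp h5)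

/-- Part 1 of the statement. -/
lemma part1 (A : Matrix (Fin m) (Fin n) ℝ) (b : EuclideanSpace ℝ (Fin m))
    (hne : {x : EuclideanSpace ℝ (Fin n) | A.mulVec x ≤ b}.Nonempty) :
    ∃! xstar : EuclideanSpace ℝ (Fin n), A.mulVec xstar ≤ b ∧
      ∀ x : EuclideanSpace ℝ (Fin n), A.mulVec x ≤ b → ‖xstar‖ ^ 2 ≤ ‖x‖ ^ 2 := by
  obtain ⟨x, hx, hmin⟩ := exists_min A b hne
  refine ⟨x, ⟨hx, fun z hz => by
    have := hmin z hz
    exact pow_le_pow_left₀ (norm_nonneg _) this 2⟩, ?_⟩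
  rintro y ⟨hy, hymin⟩
  refine min_unique A b hy hx (fun z hz => ?_) hmin
  have := hymin z hz
  exact (pow_le_pow_iff_left₀ (norm_nonneg _) (norm_nonneg _) (by norm_num)).mp this
def maskL (S : Finset (Fin m)) : EuclideanSpace ℝ (Fin m) →ₗ[ℝ] EuclideanSpace ℝ (Fin m) where
  toFun v := WithLp.toLp 2 (fun i => if i ∈ S then v i else 0)
  map_add' v w := by
    ext i
    by_cases h : i ∈ S <;> simp [h, PiLp.add_apply]
  map_smul' c v := by
    ext i
    by_cases h : i ∈ S <;> simp [h, PiLp.smul_apply]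

lemma maskL_apply (S : Finset (Fin m)) (v : EuclideanSpace ℝ (Fin m)) (i : Fin m) :
    maskL S v i = if i ∈ S then v i else 0 := rfl

lemma norm_maskL_le (S : Finset (Fin m)) (v : EuclideanSpace ℝ (Fin m)) :
    ‖maskL S v‖ ≤ ‖v‖ := by
  rw [EuclideanSpace.norm_eq, EuclideanSpace.norm_eq]
  apply Real.sqrt_le_sqrt
  apply Finset.sum_le_sum
  intro i _
  rw [maskL_apply]
  split_ifs <;> simp [sq_abs, sq_nonneg]

/-- The active-set-restricted constraint map. -/
def AS (A : Matrix (Fin m) (Fin n) ℝ) (S : Finset (Fin m)) :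
    EuclideanSpace ℝ (Fin n) →ₗ[ℝ] EuclideanSpace ℝ (Fin m) :=
  (maskL S).comp (mulVecL A)

lemma AS_apply (A : Matrix (Fin m) (Fin n) ℝ) (S : Finset (Fin m))
    (x : EuclideanSpace ℝ (Fin n)) (i : Fin m) :
    AS A S x i = if i ∈ S then A.mulVec x i else 0 := rfl

lemma mem_ker_AS {A : Matrix (Fin m) (Fin n) ℝ} {S : Finset (Fin m)}
    {x : EuclideanSpace ℝ (Fin n)} :
    x ∈ LinearMap.ker (AS A S) ↔ ∀ i ∈ S, A.mulVec x i = 0 := by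
  constructor
  · intro h i hi
    have := congrFun (congrArg (fun v : EuclideanSpace ℝ (Fin m) => (v : Fin m → ℝ)) h) i
    simpa [AS_apply, hi] using this
  · intro h
    ext i
    rw [AS_apply]
    split_ifs with hi
    · simp [h i hi]
    · rfl

/-- The antilipschitz constant for `AS A S` on the orthogonal complement of its kernel. -/
lemma exists_CS (A : Matrix (Fin m) (Fin n) ℝ) (S : Finset (Fin m)) :
    ∃ C : ℝ, 0 < C ∧ ∀ w ∈ (LinearMap.ker (AS A S))ᗮ, ‖w‖ ≤ C * ‖AS A S w‖ := by
  set W := (LinearMap.ker (AS A S))ᗮ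
  set f := (AS A S).domRestrict W with hf
  have hker : LinearMap.ker f = ⊥ := by
    rw [LinearMap.ker_eq_bot']
    intro w hw
    have h1 : (w : EuclideanSpace ℝ (Fin n)) ∈ LinearMap.ker (AS A S) := hw
    have h2 : (w : EuclideanSpace ℝ (Fin n)) ∈ W := w.2
    have : ⟪(w : EuclideanSpace ℝ (Fin n)), (w : EuclideanSpace ℝ (Fin n))⟫ = 0 :=
      (Submodule.mem_orthogonal (LinearMap.ker (AS A S)) _).mp h2 _ h1
    have := inner_self_eq_zero.mp this
    exact Subtype.ext this
  obtain ⟨Kc, hKpos, hKanti⟩ := f.exists_antilipschitzWith hker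
  refine ⟨Kc, hKpos, fun w hw => ?_⟩
  have := hKanti.le_mul_dist ⟨w, hw⟩ 0
  simpa [dist_eq_norm, hf] using this

/-- Structural lemma: a minimizer is orthogonal to the kernel of its active-set map. -/
lemma active_perp (A : Matrix (Fin m) (Fin n) ℝ) (b : EuclideanSpace ℝ (Fin m))
    {x : EuclideanSpace ℝ (Fin n)} (hx : x ∈ K A b) (hmin : ∀ z ∈ K A b, ‖x‖ ≤ ‖z‖)
    {S : Finset (Fin m)} (hS : ∀ i, i ∈ S ↔ A.mulVec x i = b i) :
    x ∈ (LinearMap.ker (AS A S))ᗮ := by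
  rw [Submodule.mem_orthogonal]
  intro k hk
  rw [mem_ker_AS] at hk
  -- eventual feasibility of x + ε • k
  have hev : ∀ᶠ ε in nhds (0 : ℝ), x + ε • k ∈ K A b := by
    have : ∀ᶠ ε in nhds (0 : ℝ), ∀ i : Fin m, A.mulVec (x + ε • k) i ≤ b i := by
      rw [eventually_all]
      intro i
      have hcoord : ∀ ε : ℝ, A.mulVec (x + ε • k) i = A.mulVec x i + ε * A.mulVec k i := by
        intro ε
        have h1 := (mulVecL A).map_add x (ε • k)
        have h2 := (mulVecL A).map_smul ε k
        have := congrFun (congrArg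
          (fun v : EuclideanSpace ℝ (Fin m) => (v : Fin m → ℝ)) h1) i
        simp only [mulVecL_apply] at this h2
        simp [Matrix.mulVec_add, Matrix.mulVec_smul]
      by_cases hi : i ∈ S
      · filter_upwards with ε
        rw [hcoord, hk i hi, mul_zero, add_zero]
        exact hx i
      · have hlt : A.mulVec x i < b i := lt_of_le_of_ne (hx i) (fun h => hi ((hS i).mpr h))
        have hcont : Tendsto (fun ε : ℝ => A.mulVec x i + ε * A.mulVec k i)
            (nhds 0) (nhds (A.mulVec x i)) := by
          have : Tendsto (fun ε : ℝ => A.mulVec x i + ε * A.mulVec k i)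
              (nhds 0) (nhds (A.mulVec x i + 0 * A.mulVec k i)) := by
            apply Tendsto.add tendsto_const_nhds
            exact (tendsto_id.mul tendsto_const_nhds)
          simpa using this
        filter_upwards [hcont.eventually_lt_const hlt] with ε hε
        rw [hcoord]
        exact le_of_lt hε
    filter_upwards [this] with ε hε
    exact fun i => hε i
  -- minimality inequality: 0 ≤ 2 ε ⟪x, k⟫ + ε² ‖k‖² for all small ε
  obtain ⟨ε₀, hε₀pos, hball⟩ := Metric.eventually_nhds_iff.mp hev
  set c : ℝ := ⟪x, k⟫ with hc
  have key : ∀ ε : ℝ, |ε| < ε₀ → 0 ≤ 2 * ε * c + ε ^ 2 * ‖k‖ ^ 2 := by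
    intro ε hε
    have hmem : x + ε • k ∈ K A b := hball (by simpa [Real.dist_eq] using hε)
    have h1 : ‖x‖ ≤ ‖x + ε • k‖ := hmin _ hmem
    have h2 : ‖x + ε • k‖ ^ 2 = ‖x‖ ^ 2 + 2 * (ε * c) + ε ^ 2 * ‖k‖ ^ 2 := by
      rw [norm_add_sq_real, real_inner_smul_right, norm_smul]
      simp only [mul_pow, hc, Real.norm_eq_abs, sq_abs]
      try ring
    nlinarith [norm_nonneg x, norm_nonneg (x + ε • k)]
  have hc0 : c = 0 := by
    rcases lt_trichotomy c 0 with hneg | hzero | hpos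
    · exfalso
      have hkpos : 0 < ‖k‖ ^ 2 + 1 := by positivity
      set t : ℝ := min (ε₀ / 2) (-c / (‖k‖ ^ 2 + 1)) with ht
      have htpos : 0 < t := lt_min (by linarith) (div_pos (by linarith) hkpos)
      have ht1 : t ≤ ε₀ / 2 := min_le_left _ _
      have ht2 : t ≤ -c / (‖k‖ ^ 2 + 1) := min_le_right _ _
      have h3 : t * (‖k‖ ^ 2 + 1) ≤ -c := by
        rw [← le_div_iff₀ hkpos]; exact ht2
      have := key t (by rw [abs_of_pos htpos]; linarith)
      nlinarith
    · exact hzero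
    · exfalso
      have hkpos : 0 < ‖k‖ ^ 2 + 1 := by positivity
      set t : ℝ := min (ε₀ / 2) (c / (‖k‖ ^ 2 + 1)) with ht
      have htpos : 0 < t := lt_min (by linarith) (div_pos (by linarith) hkpos)
      have ht1 : t ≤ ε₀ / 2 := min_le_left _ _
      have ht2 : t ≤ c / (‖k‖ ^ 2 + 1) := min_le_right _ _
      have h3 : t * (‖k‖ ^ 2 + 1) ≤ c := by
        rw [← le_div_iff₀ hkpos]; exact ht2
      have := key (-t) (by rw [abs_neg, abs_of_pos htpos]; linarith)
      nlinarith
  rw [real_inner_comm]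
  exact hc0


/-- Closedness of an equality locus for functions continuous on a closed set. -/
lemma isClosed_eqOn {E : Type*} [TopologicalSpace E] [T2Space E] {s : Set ℝ}
    (hcs : IsClosed s) {f g : ℝ → E} (hf : ContinuousOn f s) (hg : ContinuousOn g s) :
    IsClosed {t | t ∈ s ∧ f t = g t} := by
  have heq : {t | t ∈ s ∧ f t = g t} =
      Subtype.val '' {t : s | s.restrict f t = s.restrict g t} := by
    ext t
    constructor
    · rintro ⟨hts, hfg⟩; exact ⟨⟨t, hts⟩, hfg, rfl⟩
    · rintro ⟨⟨t', ht'⟩, h1, rfl⟩; exact ⟨ht', h1⟩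
  rw [heq]
  exact (hcs.isClosedEmbedding_subtypeVal.isClosedMap _
    (isClosed_eq (continuousOn_iff_continuous_restrict.mp hf)
      (continuousOn_iff_continuous_restrict.mp hg)))

/-- Closedness of a sublevel locus for functions continuous on a closed set. -/
lemma isClosed_leOn {s : Set ℝ}
    (hcs : IsClosed s) {f g : ℝ → ℝ} (hf : ContinuousOn f s) (hg : ContinuousOn g s) :
    IsClosed {t | t ∈ s ∧ f t ≤ g t} := by
  have heq : {t | t ∈ s ∧ f t ≤ g t} =
      Subtype.val '' {t : s | s.restrict f t ≤ s.restrict g t} := by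
    ext t
    constructor
    · rintro ⟨hts, hfg⟩; exact ⟨⟨t, hts⟩, hfg, rfl⟩
    · rintro ⟨⟨t', ht'⟩, h1, rfl⟩; exact ⟨ht', h1⟩
  rw [heq]
  exact (hcs.isClosedEmbedding_subtypeVal.isClosedMap _
    (isClosed_le (continuousOn_iff_continuous_restrict.mp hf)
      (continuousOn_iff_continuous_restrict.mp hg)))

/-- One-dimensional lemma: a continuous selection from finitely many affine curves
with slopes of norm at most `L` moves by at most `L` over `[0,1]`. -/
lemma onedim {E : Type*} [NormedAddCommGroup E] [InnerProductSpace ℝ E]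
    {ι : Type*} [Finite ι] [Nonempty ι]
    (f : ℝ → E) (hf : ContinuousOn f (Icc 0 1))
    (a v : ι → E) (L : ℝ) (hL : ∀ j, ‖v j‖ ≤ L)
    (hsel : ∀ t ∈ Icc (0:ℝ) 1, ∃ j, f t = a j + t • v j) :
    ‖f 1 - f 0‖ ≤ L := by
  have hL0 : 0 ≤ L := le_trans (norm_nonneg (v (Classical.arbitrary ι))) (hL _)
  by_cases h0 : f 1 = f 0
  · simp [h0, hL0]
  have hne : ‖f 1 - f 0‖ ≠ 0 := fun h => h0 (sub_eq_zero.mp (norm_eq_zero.mp h))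
  set u : E := ‖f 1 - f 0‖⁻¹ • (f 1 - f 0) with hu
  have hunorm : ‖u‖ = 1 := by
    rw [hu, norm_smul, norm_inv, norm_norm, inv_mul_cancel₀ hne]
  set h : ℝ → ℝ := fun t => ⟪u, f t⟫ with hh
  have hhcont : ContinuousOn h (Icc 0 1) := by
    apply ContinuousOn.inner continuousOn_const hf
  have claim : ∀ ε > (0 : ℝ), h 1 ≤ h 0 + (L + ε) := by
    intro ε hε
    set Q : Set ℝ := {t | t ∈ Icc 0 1 ∧ h t ≤ h 0 + (L + ε) * t} with hQ
    have hQ0 : (0 : ℝ) ∈ Q := ⟨⟨le_refl 0, zero_le_one⟩, by simp⟩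
    have hQbdd : BddAbove Q := (bddAbove_Icc (a := (0:ℝ)) (b := 1)).mono
      (fun t ht => ht.1)
    have hQclosed : IsClosed Q := by
      apply isClosed_leOn isClosed_Icc hhcont
      exact (continuousOn_const.add (continuousOn_const.mul continuousOn_id))
    set T : ℝ := sSup Q with hT
    have hTQ : T ∈ Q := hQclosed.csSup_mem ⟨0, hQ0⟩ hQbdd
    by_cases hT1 : T = 1
    · have := hTQ.2
      rw [hT1] at this
      linarith [this]
    · have hTlt : T < 1 := lt_of_le_of_ne hTQ.1.2 hT1
      exfalso
      set D : ι → Set ℝ := fun j => {t | t ∈ Ioc T 1 ∧ f t = a j + t • v j} with hD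
      have hcover : Ioc T 1 ⊆ ⋃ j, D j := by
        intro t ht
        obtain ⟨j, hj⟩ := hsel t ⟨le_trans hTQ.1.1 (le_of_lt ht.1), ht.2⟩
        exact mem_iUnion.mpr ⟨j, ht, hj⟩
      have hTcl : T ∈ closure (⋃ j, D j) := by
        apply closure_mono hcover
        rw [closure_Ioc (ne_of_lt hTlt)]
        exact ⟨le_refl T, le_of_lt hTlt⟩
      rw [closure_iUnion_of_finite] at hTcl
      obtain ⟨j, hj⟩ := mem_iUnion.mp hTcl
      have hDc : IsClosed {t | t ∈ Icc (0:ℝ) 1 ∧ f t = a j + t • v j} := by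
        apply isClosed_eqOn isClosed_Icc hf
        exact continuousOn_const.add (continuousOn_id.smul continuousOn_const)
      have hsub : D j ⊆ {t | t ∈ Icc (0:ℝ) 1 ∧ f t = a j + t • v j} := by
        rintro t ⟨ht, hft⟩
        exact ⟨⟨le_trans hTQ.1.1 (le_of_lt ht.1), ht.2⟩, hft⟩
      have hfT : f T = a j + T • v j :=
        ((closure_minimal hsub hDc) hj).2
      have hDne : (D j).Nonempty := by
        by_contra hemp
        rw [not_nonempty_iff_eq_empty] at hemp
        rw [hemp, closure_empty] at hj
        exact hj
      obtain ⟨t', ht'I, hft'⟩ := hDne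
      have ht'Q : t' ∉ Q := fun hmem => absurd (le_csSup hQbdd hmem) (not_le.mpr ht'I.1)
      have ht'Icc : t' ∈ Icc (0:ℝ) 1 := ⟨le_trans hTQ.1.1 (le_of_lt ht'I.1), ht'I.2⟩
      have ht'h : h 0 + (L + ε) * t' < h t' := by
        by_contra hcon
        exact ht'Q ⟨ht'Icc, le_of_not_gt hcon⟩
      have hdiff : h t' - h T = (t' - T) * ⟪u, v j⟫ := by
        rw [hh]
        simp only [hfT, hft', inner_add_right, real_inner_smul_right]
        ring
      have hinner : ⟪u, v j⟫ ≤ L := by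
        calc ⟪u, v j⟫ ≤ ‖u‖ * ‖v j‖ := real_inner_le_norm u (v j)
          _ = ‖v j‖ := by rw [hunorm, one_mul]
          _ ≤ L := hL j
      have hTle : h T ≤ h 0 + (L + ε) * T := hTQ.2
      have hgap : 0 < t' - T := sub_pos.mpr ht'I.1
      nlinarith [mul_le_mul_of_nonneg_left hinner (le_of_lt hgap)]
  have hfin : h 1 - h 0 = ‖f 1 - f 0‖ := by
    rw [hh]
    simp only
    rw [← inner_sub_right, hu, real_inner_smul_left, real_inner_self_eq_norm_sq]
    field_simp
  have : h 1 - h 0 ≤ L := by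
    by_contra hcon
    push_neg at hcon
    obtain ⟨ε, hε1, hε2⟩ := exists_between hcon
    have := claim (ε - L) (by linarith)
    linarith
  linarith [hfin ▸ this]

/-- Coordinates of a linear combination under `mulVec`. -/
lemma mulVec_comb (A : Matrix (Fin m) (Fin n) ℝ) (x y : EuclideanSpace ℝ (Fin n))
    (α β : ℝ) (i : Fin m) :
    A.mulVec (α • x + β • y : EuclideanSpace ℝ (Fin n)) i = α * A.mulVec x i + β * A.mulVec y i := by
  have h1 := (mulVecL A).map_add (α • x) (β • y)
  have h2 := (mulVecL A).map_smul α x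
  have h3 := (mulVecL A).map_smul β y
  have := congrFun (congrArg (fun v : EuclideanSpace ℝ (Fin m) => (v : Fin m → ℝ)) h1) i
  simp only [mulVecL_apply] at this h2 h3
  simp [Matrix.mulVec_add, Matrix.mulVec_smul]

/-- Convex combinations of feasible points are feasible for the combined rhs. -/
lemma comb_mem (A : Matrix (Fin m) (Fin n) ℝ) {c d : EuclideanSpace ℝ (Fin m)}
    {x y : EuclideanSpace ℝ (Fin n)} (hx : x ∈ K A c) (hy : y ∈ K A d) {θ : ℝ}
    (h0 : 0 ≤ θ) (h1 : θ ≤ 1) :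
    (1 - θ) • x + θ • y ∈ K A ((1 - θ) • c + θ • d) := by
  intro i
  rw [mulVec_comb]
  have hci : ((1 - θ) • c + θ • d) i = (1 - θ) * c i + θ * d i := by
    rw [PiLp.add_apply, PiLp.smul_apply, PiLp.smul_apply, smul_eq_mul, smul_eq_mul]
  rw [hci]
  have := mul_le_mul_of_nonneg_left (hx i) (by linarith : (0:ℝ) ≤ 1 - θ)
  have := mul_le_mul_of_nonneg_left (hy i) h0
  linarith

section Segment

variable (A : Matrix (Fin m) (Fin n) ℝ) (b₁ b₂ : EuclideanSpace ℝ (Fin m))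

/-- The segment of right-hand sides. -/
def bseg (t : ℝ) : EuclideanSpace ℝ (Fin m) := b₁ + t • (b₂ - b₁)

lemma bseg_comb {t : ℝ} : bseg b₁ b₂ t = (1 - t) • b₁ + t • b₂ := by
  rw [bseg, smul_sub, sub_smul, one_smul]
  abel

lemma bseg_zero : bseg b₁ b₂ 0 = b₁ := by rw [bseg, zero_smul, add_zero]

lemma bseg_one : bseg b₁ b₂ 1 = b₂ := by rw [bseg, one_smul, add_sub_cancel]

lemma bseg_sub {s t : ℝ} : bseg b₁ b₂ s - bseg b₁ b₂ t = (s - t) • (b₂ - b₁) := by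
  rw [bseg, bseg, add_sub_add_left_eq_sub, ← sub_smul]

/-- Feasible point moving along the segment. -/
lemma yseg_mem {y₁ y₂ : EuclideanSpace ℝ (Fin n)} (hy₁ : y₁ ∈ K A b₁) (hy₂ : y₂ ∈ K A b₂)
    {t : ℝ} (ht : t ∈ Icc (0:ℝ) 1) :
    (1 - t) • y₁ + t • y₂ ∈ K A (bseg b₁ b₂ t) := by
  rw [bseg_comb]
  exact comb_mem A hy₁ hy₂ ht.1 ht.2

/-- Points of the nearby feasible set close to the current minimizer. -/
lemma approx_feas {y₁ y₂ : EuclideanSpace ℝ (Fin n)} (hy₁ : y₁ ∈ K A b₁) (hy₂ : y₂ ∈ K A b₂)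
    {g : ℝ → EuclideanSpace ℝ (Fin n)}
    (hg : ∀ t ∈ Icc (0:ℝ) 1, g t ∈ K A (bseg b₁ b₂ t)) {t : ℝ} (ht : t ∈ Icc (0:ℝ) 1) :
    ∃ c : ℝ, 0 ≤ c ∧ ∀ s ∈ Icc (0:ℝ) 1, ∃ u ∈ K A (bseg b₁ b₂ s),
      ‖u - g t‖ ≤ c * |s - t| := by
  set B : ℝ := max ‖y₁‖ ‖y₂‖ + ‖g t‖ with hB
  have hBnn : 0 ≤ B := by positivity
  refine ⟨B * ((1 - t)⁻¹ + t⁻¹), by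
    have h1 : (0:ℝ) ≤ (1 - t)⁻¹ := inv_nonneg.mpr (by linarith [ht.2])
    have h2 : (0:ℝ) ≤ t⁻¹ := inv_nonneg.mpr ht.1
    positivity, ?_⟩
  intro s hs
  rcases le_or_gt t s with hts | hst
  · -- s ≥ t : mix with y₂
    rcases eq_or_lt_of_le ht.2 with ht1 | ht1
    · -- t = 1, so s = 1 = t
      have hst : s = t := le_antisymm (ht1 ▸ hs.2) hts
      exact ⟨g t, hst ▸ hg t ht, by simp [hst]⟩
    · set θ : ℝ := (s - t) / (1 - t) with hθ
      have hθ0 : 0 ≤ θ := div_nonneg (by linarith) (by linarith)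
      have hθ1 : θ ≤ 1 := by
        rw [hθ, div_le_one (by linarith)]
        linarith [hs.2]
      refine ⟨(1 - θ) • g t + θ • y₂, ?_, ?_⟩
      · have := comb_mem A (hg t ht) hy₂ hθ0 hθ1
        have heq : (1 - θ) • bseg b₁ b₂ t + θ • b₂ = bseg b₁ b₂ s := by
          ext i
          rw [PiLp.add_apply, PiLp.smul_apply, PiLp.smul_apply, smul_eq_mul, smul_eq_mul]
          have e1 : bseg b₁ b₂ t i = (1 - t) * b₁ i + t * b₂ i := by
            rw [bseg_comb, PiLp.add_apply, PiLp.smul_apply, PiLp.smul_apply,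
              smul_eq_mul, smul_eq_mul]
          have e2 : bseg b₁ b₂ s i = (1 - s) * b₁ i + s * b₂ i := by
            rw [bseg_comb, PiLp.add_apply, PiLp.smul_apply, PiLp.smul_apply,
              smul_eq_mul, smul_eq_mul]
          rw [e1, e2, hθ]
          have h1t : (1:ℝ) - t ≠ 0 := by linarith
          field_simp
          ring
        rwa [heq] at this
      · have he : (1 - θ) • g t + θ • y₂ - g t = θ • (y₂ - g t) := by
          rw [smul_sub, sub_smul, one_smul]
          abel
        rw [he, norm_smul, Real.norm_eq_abs, abs_of_nonneg hθ0]
        have h1 : ‖y₂ - g t‖ ≤ B := by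
          have := norm_sub_le y₂ (g t)
          have : ‖y₂‖ ≤ max ‖y₁‖ ‖y₂‖ := le_max_right _ _
          calc ‖y₂ - g t‖ ≤ ‖y₂‖ + ‖g t‖ := norm_sub_le _ _
            _ ≤ B := by rw [hB]; gcongr
        have h2 : θ ≤ |s - t| * ((1 - t)⁻¹ + t⁻¹) := by
          rw [hθ, div_eq_mul_inv, abs_of_nonneg (by linarith : (0:ℝ) ≤ s - t)]
          have : (0:ℝ) ≤ t⁻¹ := inv_nonneg.mpr ht.1
          nlinarith [sub_nonneg.mpr hts]
        calc θ * ‖y₂ - g t‖ ≤ (|s - t| * ((1 - t)⁻¹ + t⁻¹)) * B := by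
              apply mul_le_mul h2 h1 (norm_nonneg _)
              exact mul_nonneg (abs_nonneg _) (add_nonneg
                (inv_nonneg.mpr (by linarith [ht.2])) (inv_nonneg.mpr ht.1))
          _ = B * ((1 - t)⁻¹ + t⁻¹) * |s - t| := by ring
  · -- s < t : mix with y₁, t > 0
    have ht0 : 0 < t := lt_of_le_of_lt hs.1 hst
    set θ : ℝ := (t - s) / t with hθ
    have hθ0 : 0 ≤ θ := div_nonneg (by linarith) (by linarith)
    have hθ1 : θ ≤ 1 := by
      rw [hθ, div_le_one ht0]
      linarith [hs.1]
    refine ⟨(1 - θ) • g t + θ • y₁, ?_, ?_⟩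
    · have := comb_mem A (hg t ht) hy₁ hθ0 hθ1
      have heq : (1 - θ) • bseg b₁ b₂ t + θ • b₁ = bseg b₁ b₂ s := by
        ext i
        rw [PiLp.add_apply, PiLp.smul_apply, PiLp.smul_apply, smul_eq_mul, smul_eq_mul]
        have e1 : bseg b₁ b₂ t i = (1 - t) * b₁ i + t * b₂ i := by
          rw [bseg_comb, PiLp.add_apply, PiLp.smul_apply, PiLp.smul_apply,
            smul_eq_mul, smul_eq_mul]
        have e2 : bseg b₁ b₂ s i = (1 - s) * b₁ i + s * b₂ i := by
          rw [bseg_comb, PiLp.add_apply, PiLp.smul_apply, PiLp.smul_apply,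
            smul_eq_mul, smul_eq_mul]
        rw [e1, e2, hθ]
        have h0t : t ≠ 0 := ne_of_gt ht0
        field_simp
        ring
      rwa [heq] at this
    · have he : (1 - θ) • g t + θ • y₁ - g t = θ • (y₁ - g t) := by
        rw [smul_sub, sub_smul, one_smul]
        abel
      rw [he, norm_smul, Real.norm_eq_abs, abs_of_nonneg hθ0]
      have h1 : ‖y₁ - g t‖ ≤ B := by
        calc ‖y₁ - g t‖ ≤ ‖y₁‖ + ‖g t‖ := norm_sub_le _ _
          _ ≤ B := by
              rw [hB]
              gcongr
              exact le_max_left _ _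
      have h2 : θ ≤ |s - t| * ((1 - t)⁻¹ + t⁻¹) := by
        rw [hθ, div_eq_mul_inv, abs_of_nonpos (by linarith : s - t ≤ 0)]
        have : (0:ℝ) ≤ (1 - t)⁻¹ := inv_nonneg.mpr (by linarith [ht.2])
        nlinarith [sub_nonneg.mpr (le_of_lt hst)]
      calc θ * ‖y₁ - g t‖ ≤ (|s - t| * ((1 - t)⁻¹ + t⁻¹)) * B := by
            apply mul_le_mul h2 h1 (norm_nonneg _)
            exact mul_nonneg (abs_nonneg _) (add_nonneg
              (inv_nonneg.mpr (by linarith [ht.2])) (inv_nonneg.mpr ht.1))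
        _ = B * ((1 - t)⁻¹ + t⁻¹) * |s - t| := by ring

end Segment

/-- Continuity of the minimizer along the segment. -/
lemma g_continuousOn (A : Matrix (Fin m) (Fin n) ℝ) (b₁ b₂ : EuclideanSpace ℝ (Fin m))
    {y₁ y₂ : EuclideanSpace ℝ (Fin n)} (hy₁ : y₁ ∈ K A b₁) (hy₂ : y₂ ∈ K A b₂)
    {g : ℝ → EuclideanSpace ℝ (Fin n)}
    (hg : ∀ t ∈ Icc (0:ℝ) 1, g t ∈ K A (bseg b₁ b₂ t) ∧
      ∀ z ∈ K A (bseg b₁ b₂ t), ‖g t‖ ≤ ‖z‖) :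
    ContinuousOn g (Icc 0 1) := by
  have hbd : ∀ t ∈ Icc (0:ℝ) 1, ‖g t‖ ≤ max ‖y₁‖ ‖y₂‖ := by
    intro t ht
    have h1 := (hg t ht).2 _ (yseg_mem A b₁ b₂ hy₁ hy₂ ht)
    have h2 : ‖(1 - t) • y₁ + t • y₂‖ ≤ (1 - t) * ‖y₁‖ + t * ‖y₂‖ := by
      calc ‖(1 - t) • y₁ + t • y₂‖ ≤ ‖(1 - t) • y₁‖ + ‖t • y₂‖ := norm_add_le _ _
        _ = (1 - t) * ‖y₁‖ + t * ‖y₂‖ := by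
            rw [norm_smul, norm_smul, Real.norm_eq_abs, Real.norm_eq_abs,
              abs_of_nonneg (by linarith [ht.2]), abs_of_nonneg ht.1]
    have h3 : (1 - t) * ‖y₁‖ + t * ‖y₂‖ ≤ max ‖y₁‖ ‖y₂‖ := by
      have := le_max_left ‖y₁‖ ‖y₂‖
      have := le_max_right ‖y₁‖ ‖y₂‖
      nlinarith [ht.1, ht.2]
    linarith
  rw [continuousOn_iff_continuous_restrict]
  apply SeqContinuous.continuous
  intro x p hx
  apply tendsto_of_subseq_tendsto
  intro ns hns
  set s : ℕ → ℝ := fun k => ((x (ns k) : Icc (0:ℝ) 1) : ℝ) with hsdef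
  have hsmem : ∀ k, s k ∈ Icc (0:ℝ) 1 := fun k => (x (ns k)).2
  have hstend : Tendsto s atTop (nhds ((p : Icc (0:ℝ) 1) : ℝ)) := by
    exact (continuous_subtype_val.tendsto p).comp (hx.comp hns)
  have hpmem : ((p : Icc (0:ℝ) 1) : ℝ) ∈ Icc (0:ℝ) 1 := p.2
  -- Bolzano--Weierstrass on the bounded sequence g ∘ s
  have hball : ∀ k, g (s k) ∈ Metric.closedBall (0 : EuclideanSpace ℝ (Fin n))
      (max ‖y₁‖ ‖y₂‖) := by
    intro k
    rw [Metric.mem_closedBall, dist_zero_right]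
    exact hbd _ (hsmem k)
  obtain ⟨z, _, φ, hφ, hzt⟩ := tendsto_subseq_of_bounded Metric.isBounded_closedBall hball
  have hstend' : Tendsto (fun k => s (φ k)) atTop (nhds ((p : Icc (0:ℝ) 1) : ℝ)) :=
    hstend.comp hφ.tendsto_atTop
  -- z is feasible for bseg p
  have hzfeas : z ∈ K A (bseg b₁ b₂ ((p : Icc (0:ℝ) 1) : ℝ)) := by
    intro i
    have hL : Tendsto (fun k => A.mulVec (g (s (φ k))) i) atTop
        (nhds (A.mulVec z i)) := by
      have hc : Continuous fun w : EuclideanSpace ℝ (Fin n) => A.mulVec w i :=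
        (EuclideanSpace.proj i).continuous.comp (continuous_mulVecL A)
      exact (hc.tendsto z).comp hzt
    have hR : Tendsto (fun k => bseg b₁ b₂ (s (φ k)) i) atTop
        (nhds (bseg b₁ b₂ ((p : Icc (0:ℝ) 1) : ℝ) i)) := by
      have hc : Continuous fun t : ℝ => bseg b₁ b₂ t i := by
        have : (fun t : ℝ => bseg b₁ b₂ t i) = fun t => b₁ i + t * (b₂ - b₁) i := by
          funext t
          rw [bseg, PiLp.add_apply, PiLp.smul_apply, smul_eq_mul]
        rw [this]
        exact continuous_const.add (continuous_id.mul continuous_const)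
      exact (hc.tendsto _).comp hstend'
    exact le_of_tendsto_of_tendsto' hL hR fun k => (hg _ (hsmem (φ k))).1 i
  -- ‖z‖ is at most the minimal norm
  obtain ⟨c, hc0, hcall⟩ := approx_feas A b₁ b₂ hy₁ hy₂ (fun t ht => (hg t ht).1) hpmem
  have hzle : ‖z‖ ≤ ‖g ((p : Icc (0:ℝ) 1) : ℝ)‖ := by
    have hineq : ∀ k, ‖g (s (φ k))‖ ≤ ‖g ((p : Icc (0:ℝ) 1) : ℝ)‖ +
        c * |s (φ k) - ((p : Icc (0:ℝ) 1) : ℝ)| := by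
      intro k
      obtain ⟨u, hu, hud⟩ := hcall _ (hsmem (φ k))
      calc ‖g (s (φ k))‖ ≤ ‖u‖ := (hg _ (hsmem (φ k))).2 u hu
        _ ≤ ‖g ((p : Icc (0:ℝ) 1) : ℝ)‖ + ‖u - g ((p : Icc (0:ℝ) 1) : ℝ)‖ := by
            have := norm_add_le (g ((p : Icc (0:ℝ) 1) : ℝ))
              (u - g ((p : Icc (0:ℝ) 1) : ℝ))
            simpa using this
        _ ≤ _ := by linarith [hud]
    have hL : Tendsto (fun k => ‖g (s (φ k))‖) atTop (nhds ‖z‖) :=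
      (continuous_norm.tendsto z).comp hzt
    have hR : Tendsto (fun k => ‖g ((p : Icc (0:ℝ) 1) : ℝ)‖ +
        c * |s (φ k) - ((p : Icc (0:ℝ) 1) : ℝ)|) atTop
        (nhds (‖g ((p : Icc (0:ℝ) 1) : ℝ)‖ + c * |(0:ℝ)|)) := by
      apply Tendsto.add tendsto_const_nhds
      apply Tendsto.const_mul
      have : Tendsto (fun k => s (φ k) - ((p : Icc (0:ℝ) 1) : ℝ)) atTop (nhds 0) := by
        have := hstend'.sub (tendsto_const_nhds
          (x := ((p : Icc (0:ℝ) 1) : ℝ)) (f := atTop))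
        simpa using this
      exact (continuous_abs.tendsto 0).comp this
    have := le_of_tendsto_of_tendsto' hL hR hineq
    simpa using this
  -- conclude z = g p
  have hzmin : ∀ w ∈ K A (bseg b₁ b₂ ((p : Icc (0:ℝ) 1) : ℝ)), ‖z‖ ≤ ‖w‖ :=
    fun w hw => le_trans hzle ((hg _ hpmem).2 w hw)
  have hzeq : z = g ((p : Icc (0:ℝ) 1) : ℝ) :=
    min_unique A _ hzfeas (hg _ hpmem).1 hzmin (hg _ hpmem).2
  refine ⟨φ, ?_⟩
  have hfin : Tendsto (fun k => g (s (φ k))) atTop (nhds (g ((p : Icc (0:ℝ) 1) : ℝ))) := by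
    rw [← hzeq]; exact hzt
  exact hfin

end Stmt12

open Stmt12

/-- Minimum-norm selection for a strictly convex QP `min ‖x‖² s.t. Ax ≤ b`:
for each `b` with nonempty feasible set the minimizer exists and is unique,
and the minimizer depends Lipschitz-continuously on `b`, with constant
depending only on `A`. -/
theorem stmt_12 {m n : ℕ} (A : Matrix (Fin m) (Fin n) ℝ) :
    (∀ b : EuclideanSpace ℝ (Fin m),
      {x : EuclideanSpace ℝ (Fin n) | A.mulVec x ≤ b}.Nonempty →
      ∃! xstar : EuclideanSpace ℝ (Fin n), A.mulVec xstar ≤ b ∧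
        ∀ x : EuclideanSpace ℝ (Fin n), A.mulVec x ≤ b → ‖xstar‖ ^ 2 ≤ ‖x‖ ^ 2) ∧
    ∃ C > (0 : ℝ), ∀ b₁ b₂ : EuclideanSpace ℝ (Fin m),
      {x : EuclideanSpace ℝ (Fin n) | A.mulVec x ≤ b₁}.Nonempty →
      {x : EuclideanSpace ℝ (Fin n) | A.mulVec x ≤ b₂}.Nonempty →
      ∀ x₁ x₂ : EuclideanSpace ℝ (Fin n),
        (A.mulVec x₁ ≤ b₁ ∧ ∀ x : EuclideanSpace ℝ (Fin n),
            A.mulVec x ≤ b₁ → ‖x₁‖ ^ 2 ≤ ‖x‖ ^ 2) →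
        (A.mulVec x₂ ≤ b₂ ∧ ∀ x : EuclideanSpace ℝ (Fin n),
            A.mulVec x ≤ b₂ → ‖x₂‖ ^ 2 ≤ ‖x‖ ^ 2) →
        ‖x₁ - x₂‖ ≤ C * ‖b₁ - b₂‖ := by
  classical
  constructor
  · exact fun b hb => part1 A b hb
  · choose CS hCSpos hCS using fun S : Finset (Fin m) => exists_CS A S
    set C : ℝ := 1 + ∑ S : Finset (Fin m), CS S with hCdef
    have hsumnn : (0:ℝ) ≤ ∑ S : Finset (Fin m), CS S :=
      Finset.sum_nonneg fun S _ => le_of_lt (hCSpos S)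
    have hCpos : 0 < C := by rw [hCdef]; linarith
    have hCle : ∀ S : Finset (Fin m), CS S ≤ C := by
      intro S
      have h1 : CS S ≤ ∑ S' : Finset (Fin m), CS S' :=
        Finset.single_le_sum (fun i _ => le_of_lt (hCSpos i)) (Finset.mem_univ S)
      rw [hCdef]; linarith
    refine ⟨C, hCpos, ?_⟩
    intro b₁ b₂ hne₁ hne₂ x₁ x₂ hx₁ hx₂
    obtain ⟨y₁, hy₁⟩ := hne₁
    obtain ⟨y₂, hy₂⟩ := hne₂
    have hy₁' : y₁ ∈ K A b₁ := hy₁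
    have hy₂' : y₂ ∈ K A b₂ := hy₂
    have hmin₁ : ∀ z ∈ K A b₁, ‖x₁‖ ≤ ‖z‖ := fun z hz =>
      (pow_le_pow_iff_left₀ (norm_nonneg _) (norm_nonneg _) (by norm_num)).mp (hx₁.2 z hz)
    have hmin₂ : ∀ z ∈ K A b₂, ‖x₂‖ ≤ ‖z‖ := fun z hz =>
      (pow_le_pow_iff_left₀ (norm_nonneg _) (norm_nonneg _) (by norm_num)).mp (hx₂.2 z hz)
    have hfeas : ∀ t ∈ Set.Icc (0:ℝ) 1, (K A (bseg b₁ b₂ t)).Nonempty :=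
      fun t ht => ⟨_, yseg_mem A b₁ b₂ hy₁' hy₂' ht⟩
    set g : ℝ → EuclideanSpace ℝ (Fin n) := fun t =>
      if h : (K A (bseg b₁ b₂ t)).Nonempty then (exists_min A _ h).choose else 0 with hgdef
    have hgspec : ∀ t ∈ Set.Icc (0:ℝ) 1, g t ∈ K A (bseg b₁ b₂ t) ∧
        ∀ z ∈ K A (bseg b₁ b₂ t), ‖g t‖ ≤ ‖z‖ := by
      intro t ht
      rw [hgdef]
      simp only [dif_pos (hfeas t ht)]
      obtain ⟨h1, h2⟩ := (exists_min A (bseg b₁ b₂ t) (hfeas t ht)).choose_spec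
      exact ⟨h1, h2⟩
    have hg0 : g 0 = x₁ := by
      have h := hgspec 0 ⟨le_refl 0, zero_le_one⟩
      rw [bseg_zero] at h
      exact min_unique A b₁ h.1 hx₁.1 h.2 hmin₁
    have hg1 : g 1 = x₂ := by
      have h := hgspec 1 ⟨zero_le_one, le_refl 1⟩
      rw [bseg_one] at h
      exact min_unique A b₂ h.1 hx₂.1 h.2 hmin₂
    set ES : Finset (Fin m) → Set ℝ := fun S =>
      {t | t ∈ Set.Icc (0:ℝ) 1 ∧ g t ∈ (LinearMap.ker (AS A S))ᗮ ∧
        AS A S (g t) = maskL S (bseg b₁ b₂ t)} with hESdef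
    have hactive : ∀ t ∈ Set.Icc (0:ℝ) 1, ∃ S : Finset (Fin m), t ∈ ES S := by
      intro t ht
      refine ⟨Finset.univ.filter (fun i => A.mulVec (g t) i = bseg b₁ b₂ t i), ht, ?_, ?_⟩
      · exact active_perp A _ (hgspec t ht).1 (hgspec t ht).2
          (fun i => by simp [Finset.mem_filter])
      · ext i
        rw [AS_apply, maskL_apply]
        split_ifs with hi
        · exact (Finset.mem_filter.mp hi).2
        · rfl
    have key : ∀ S : Finset (Fin m), ∃ aS vS : EuclideanSpace ℝ (Fin n),
        (∀ t ∈ ES S, g t = aS + t • vS) ∧ ‖vS‖ ≤ CS S * ‖b₂ - b₁‖ := by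
      intro S
      by_cases hES : (ES S).Nonempty
      · obtain ⟨t₀, ht₀⟩ := hES
        by_cases hsec : ∃ t' ∈ ES S, t' ≠ t₀
        · obtain ⟨t', ht', hne'⟩ := hsec
          set v : EuclideanSpace ℝ (Fin n) := (t' - t₀)⁻¹ • (g t' - g t₀) with hvdef
          have hsub : ∀ {s t : ℝ}, s ∈ ES S → t ∈ ES S →
              AS A S (g s - g t) = (s - t) • maskL S (b₂ - b₁) := by
            intro s t hs ht2
            rw [map_sub, hs.2.2, ht2.2.2, ← map_sub, bseg_sub, _root_.map_smul]
          have hvker : AS A S v = maskL S (b₂ - b₁) := by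
            rw [hvdef, _root_.map_smul, hsub ht' ht₀, inv_smul_smul₀ (sub_ne_zero.mpr hne')]
          have hvperp : v ∈ (LinearMap.ker (AS A S))ᗮ :=
            Submodule.smul_mem _ _ (Submodule.sub_mem _ ht'.2.1 ht₀.2.1)
          have hrepS : ∀ t ∈ ES S, g t = (g t₀ - t₀ • v) + t • v := by
            intro t htS
            have hwker : g t - g t₀ - (t - t₀) • v ∈ LinearMap.ker (AS A S) := by
              rw [LinearMap.mem_ker, map_sub, _root_.map_smul, hsub htS ht₀, hvker]
              rw [sub_self]
            have hwperp : g t - g t₀ - (t - t₀) • v ∈ (LinearMap.ker (AS A S))ᗮ :=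
              Submodule.sub_mem _ (Submodule.sub_mem _ htS.2.1 ht₀.2.1)
                (Submodule.smul_mem _ _ hvperp)
            have hzero : g t - g t₀ - (t - t₀) • v = 0 := by
              have h0 := (Submodule.mem_orthogonal _ _).mp hwperp _ hwker
              exact inner_self_eq_zero.mp h0
            have hgt : g t = g t₀ + (t - t₀) • v := by
              have h := hzero
              rw [sub_sub] at h
              exact sub_eq_zero.mp h
            rw [hgt, sub_smul]
            abel
          refine ⟨g t₀ - t₀ • v, v, hrepS, ?_⟩
          calc ‖v‖ ≤ CS S * ‖AS A S v‖ := hCS S v hvperp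
            _ = CS S * ‖maskL S (b₂ - b₁)‖ := by rw [hvker]
            _ ≤ CS S * ‖b₂ - b₁‖ :=
                mul_le_mul_of_nonneg_left (norm_maskL_le _ _) (le_of_lt (hCSpos S))
        · push_neg at hsec
          refine ⟨g t₀, 0, ?_, by
            rw [norm_zero]
            exact mul_nonneg (le_of_lt (hCSpos S)) (norm_nonneg _)⟩
          intro t htS
          rw [hsec t htS, smul_zero, add_zero]
      · rw [Set.not_nonempty_iff_eq_empty] at hES
        refine ⟨0, 0, ?_, by
          rw [norm_zero]
          exact mul_nonneg (le_of_lt (hCSpos S)) (norm_nonneg _)⟩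
        intro t htS
        rw [hES] at htS
        exact absurd htS (Set.notMem_empty t)
    choose aa vv hrep hvb using key
    have hcont := g_continuousOn A b₁ b₂ hy₁' hy₂' (fun t ht => hgspec t ht)
    have hlip := onedim g hcont aa vv (C * ‖b₂ - b₁‖)
      (fun S => le_trans (hvb S) (mul_le_mul_of_nonneg_right (hCle S) (norm_nonneg _)))
      (fun t ht => by
        obtain ⟨S, hS⟩ := hactive t ht
        exact ⟨S, hrep S t hS⟩)
    rw [hg0, hg1] at hlip
    calc ‖x₁ - x₂‖ = ‖x₂ - x₁‖ := norm_sub_rev _ _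
      _ ≤ C * ‖b₂ - b₁‖ := hlip
      _ = C * ‖b₁ - b₂‖ := by rw [norm_sub_rev]
end
end

section
/- (Lemma 3 of the paper.) Fix a shared server $i$ with job set $\mathcal{J}_i$, service rates $\mu_{ij} > 0$, and limiting arrival rates $\lambda_j > 0$ satisfying the heavy-traffic condition $\sum_{j \in \mathcal{J}_i} \lambda_j/\mu_{ij} = 1$. Let $\{\mathcal{J}_i^>, \mathcal{J}_i^\le\}$ partition $\mathcal{J}_i$, and let $Q_{ij} \ge 0$ and $q^*_{ij} \ge 0$ satisfy $\sum_{j \in \mathcal{J}_i} Q_{ij}/\mu_{ij} = \sum_{j \in \mathcal{J}_i} q^*_{ij}/\mu_{ij}$, with $Q_{ij} > q^*_{ij}$ for $j \in \mathcal{J}_i^>$ and $Q_{ij} \le q^*_{ij}$ for $j \in \mathcal{J}_i^\le$. Then $L \ge 0$ satisfies the fixed-point equation $L = \sum_{j \in \mathcal{J}_i} (\lambda_j L - q^*_{ij} + Q_{ij})^+ / \mu_{ij}$ if and only if $L \ge \max_{j \in \mathcal{J}_i^\le} (q^*_{ij} - Q_{ij})/\lambda_j$. -/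
open Finset

/-- Lemma 3: characterization of solutions of the review-period fixed-point
equation. Under the heavy-traffic condition `∑_{j ∈ 𝒥ᵢ} λ_j/μ_{ij} = 1` and the
workload-balance condition, `L ≥ 0` satisfies
`L = ∑_{j ∈ 𝒥ᵢ} (λ_j L − q*_{ij} + Q_{ij})⁺/μ_{ij}`
iff `L ≥ (q*_{ij} − Q_{ij})/λ_j` for every `j ∈ 𝒥ᵢ^≤`. -/
theorem stmt_13 {ι : Type*} [DecidableEq ι] (J Jg Jl : Finset ι)
    (μ lam Q qstar : ι → ℝ)
    (hpart : Jg ∪ Jl = J) (hdisj : Disjoint Jg Jl)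
    (hμ : ∀ j ∈ J, 0 < μ j) (hlam : ∀ j ∈ J, 0 < lam j)
    (hht : ∑ j ∈ J, lam j / μ j = 1)
    (hQ : ∀ j ∈ J, 0 ≤ Q j) (hqstar : ∀ j ∈ J, 0 ≤ qstar j)
    (hbal : ∑ j ∈ J, Q j / μ j = ∑ j ∈ J, qstar j / μ j)
    (hg : ∀ j ∈ Jg, qstar j < Q j) (hl : ∀ j ∈ Jl, Q j ≤ qstar j)
    (L : ℝ) (hL : 0 ≤ L) :
    (L = ∑ j ∈ J, max (lam j * L - qstar j + Q j) 0 / μ j) ↔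
      ∀ j ∈ Jl, (qstar j - Q j) / lam j ≤ L := by
  set x : ι → ℝ := fun j => lam j * L - qstar j + Q j with hx
  have hId : ∑ j ∈ J, x j / μ j = L := by
    have h1 : ∑ j ∈ J, x j / μ j
        = L * ∑ j ∈ J, lam j / μ j
          + (∑ j ∈ J, Q j / μ j - ∑ j ∈ J, qstar j / μ j) := by
      rw [Finset.mul_sum, ← Finset.sum_sub_distrib, ← Finset.sum_add_distrib]
      refine Finset.sum_congr rfl fun j hj => ?_
      have := (hμ j hj).ne'
      field_simp [hx]
      ring
    rw [h1, hht, hbal]; ring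
  have hsplit : ∑ j ∈ J, (max (x j) 0 - x j) / μ j
      = (∑ j ∈ J, max (x j) 0 / μ j) - ∑ j ∈ J, x j / μ j := by
    rw [← Finset.sum_sub_distrib]
    exact Finset.sum_congr rfl fun j hj => sub_div _ _ _
  have keyiff : (L = ∑ j ∈ J, max (x j) 0 / μ j)
      ↔ ∀ j ∈ J, 0 ≤ x j := by
    constructor
    · intro h j hj
      have hzero : ∑ j ∈ J, (max (x j) 0 - x j) / μ j = 0 := by
        rw [hsplit, hId, ← h]; ring
      have hnn : ∀ k ∈ J, 0 ≤ (max (x k) 0 - x k) / μ k := fun k hk =>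
        div_nonneg (by simp [le_max_left]) (hμ k hk).le
      have := (Finset.sum_eq_zero_iff_of_nonneg hnn).mp hzero j hj
      have hterm : max (x j) 0 - x j = 0 := by
        rcases div_eq_zero_iff.mp this with h' | h'
        · exact h'
        · exact absurd h' (hμ j hj).ne'
      by_contra hneg
      push_neg at hneg
      have : max (x j) 0 = 0 := max_eq_right hneg.le
      rw [this] at hterm
      linarith
    · intro h
      rw [← hId]
      refine Finset.sum_congr rfl fun j hj => ?_
      rw [max_eq_left (h j hj)]
  rw [keyiff]
  constructor
  · intro h j hj
    have hjJ : j ∈ J := hpart ▸ Finset.mem_union_right _ hj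
    rw [div_le_iff₀ (hlam j hjJ)]
    have := h j hjJ
    simp only [hx] at this
    nlinarith
  · intro h j hj
    rw [← hpart] at hj
    rcases Finset.mem_union.mp hj with hj' | hj'
    · have hjJ : j ∈ J := hpart ▸ hj
      have := hg j hj'
      have : 0 ≤ lam j * L := mul_nonneg (hlam j hjJ).le hL
      simp only [hx]
      nlinarith [hg j hj']
    · have hjJ : j ∈ J := hpart ▸ hj
      have := (div_le_iff₀ (hlam j hjJ)).mp (h j hj')
      simp only [hx]
      nlinarith
end
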